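/- arXiv:0906.3246 — 7 statements merged into one kernel-verified Lean document; each statement's English description precedes it below -/
import Mathlib

section
/- Suppose a₁, a₂, b₁, b₂, τ, σ are positive real numbers with b₂ < a₁ and 0 < a₂ - b₁ < (1/(τ+σ))·ln(a₁/b₂). Then the system of inequalities a₂·e^(yτ) - b₁·e^(-yσ) ≤ x and b₂·e^(xσ) - a₁·e^(-xτ) ≤ y has a solution with x > 0 and y > 0. -/
open Real

theorem stmt_5 (a₁ a₂ b₁ b₂ τ σ : ℝ) (ha₁ : 0 < a₁) (ha₂ : 0 < a₂)
    (hb₁ : 0 < b₁) (hb₂ : 0 < b₂) (hτ : 0 < τ) (hσ : 0 < σ)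
    (h1 : b₂ < a₁) (h2 : 0 < a₂ - b₁)
    (h3 : a₂ - b₁ < (1 / (τ + σ)) * Real.log (a₁ / b₂)) :
    ∃ x y : ℝ, 0 < x ∧ 0 < y ∧
      a₂ * Real.exp (y * τ) - b₁ * Real.exp (-(y * σ)) ≤ x ∧
      b₂ * Real.exp (x * σ) - a₁ * Real.exp (-(x * τ)) ≤ y := by
  have hτσ : 0 < τ + σ := by linarith
  set x := Real.log (a₁ / b₂) / (τ + σ) with hxdef
  have hlog : 0 < Real.log (a₁ / b₂) :=
    Real.log_pos (by rw [lt_div_iff₀ hb₂]; linarith)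
  have hx0 : 0 < x := div_pos hlog hτσ
  have hxval : x * σ + x * τ = Real.log (a₁ / b₂) := by
    rw [hxdef, ← mul_add, add_comm σ τ]; field_simp
  have hkey : b₂ * Real.exp (x * σ) - a₁ * Real.exp (-(x * τ)) = 0 := by
    have hE : Real.exp (x * σ) * Real.exp (x * τ) = a₁ / b₂ := by
      rw [← Real.exp_add, hxval, Real.exp_log (div_pos ha₁ hb₂)]
    have hEτ : (0:ℝ) < Real.exp (x * τ) := Real.exp_pos _
    have h4 : b₂ * Real.exp (x * σ) * Real.exp (x * τ) = a₁ := by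
      rw [mul_assoc, hE]; field_simp
    rw [Real.exp_neg, sub_eq_zero]
    field_simp
    linarith [h4]
  have hfx : a₂ - b₁ < x := by
    have : (1 / (τ + σ)) * Real.log (a₁ / b₂) = x := by
      rw [hxdef]; ring
    linarith [h3, this]
  set f : ℝ → ℝ := fun y => a₂ * Real.exp (y * τ) - b₁ * Real.exp (-(y * σ)) with hfdef
  have hcont : ContinuousAt f 0 := by fun_prop
  have hf0 : f 0 = a₂ - b₁ := by simp [hfdef]
  have hev : ∀ᶠ y in nhds (0 : ℝ), f y < x := by
    have : Set.Iio x ∈ nhds (f 0) := Iio_mem_nhds (by rw [hf0]; exact hfx)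
    exact hcont this
  have hev' : ∀ᶠ y in nhdsWithin (0 : ℝ) (Set.Ioi 0), f y < x ∧ y ∈ Set.Ioi (0:ℝ) :=
    (hev.filter_mono nhdsWithin_le_nhds).and eventually_mem_nhdsWithin
  obtain ⟨y, hfy, hy0⟩ := hev'.exists
  exact ⟨x, y, hx0, hy0, hfy.le, by rw [hkey]; exact le_of_lt hy0⟩
end

section
/- Suppose a₁, a₂, b₁, b₂, τ, σ are positive real numbers with a₂ < b₁ and 0 < b₂ - a₁ < (1/(τ+σ))·ln(b₁/a₂). Then the system of inequalities a₂·e^(yτ) - b₁·e^(-yσ) ≤ x and b₂·e^(xσ) - a₁·e^(-xτ) ≤ y has a solution with x > 0 and y > 0. -/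
open Real

theorem stmt_6 (a₁ a₂ b₁ b₂ τ σ : ℝ) (ha₁ : 0 < a₁) (ha₂ : 0 < a₂)
    (hb₁ : 0 < b₁) (hb₂ : 0 < b₂) (hτ : 0 < τ) (hσ : 0 < σ)
    (h1 : a₂ < b₁) (h2 : 0 < b₂ - a₁)
    (h3 : b₂ - a₁ < (1 / (τ + σ)) * Real.log (b₁ / a₂)) :
    ∃ x y : ℝ, 0 < x ∧ 0 < y ∧
      a₂ * Real.exp (y * τ) - b₁ * Real.exp (-(y * σ)) ≤ x ∧
      b₂ * Real.exp (x * σ) - a₁ * Real.exp (-(x * τ)) ≤ y := by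
  set y : ℝ := (1 / (τ + σ)) * Real.log (b₁ / a₂) with hy
  have hy0 : 0 < y := lt_trans h2 h3
  set ε : ℝ := y - (b₂ - a₁) with hε
  have hε0 : 0 < ε := by simp [hε]; linarith
  have hts : 0 < τ + σ := by linarith
  have h2b : (0:ℝ) < ε / (2 * b₂) := div_pos hε0 (by linarith)
  have hlogpos : 0 < Real.log (1 + ε / (2 * b₂)) := Real.log_pos (by linarith)
  set x₁ : ℝ := σ⁻¹ * Real.log (1 + ε / (2 * b₂)) with hx₁
  set x₂ : ℝ := ε / (2 * a₁ * τ) with hx₂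
  have hx₁0 : 0 < x₁ := mul_pos (inv_pos.2 hσ) hlogpos
  have hx₂0 : 0 < x₂ := div_pos hε0 (by positivity)
  refine ⟨min x₁ x₂, y, lt_min hx₁0 hx₂0, hy0, ?_, ?_⟩
  · -- first inequality: LHS = 0
    have key : a₂ * Real.exp (y * τ) = b₁ * Real.exp (-(y * σ)) := by
      have hexp : Real.exp (y * (τ + σ)) = b₁ / a₂ := by
        have : y * (τ + σ) = Real.log (b₁ / a₂) := by
          rw [hy, one_div, inv_mul_eq_div, div_mul_cancel₀ _ hts.ne']
        rw [this, Real.exp_log (div_pos hb₁ ha₂)]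
      have h := congrArg (fun t => a₂ * t * Real.exp (-(y * σ))) hexp
      have e1 : Real.exp (y * (τ + σ)) * Real.exp (-(y * σ)) = Real.exp (y * τ) := by
        rw [← Real.exp_add]; ring_nf
      calc a₂ * Real.exp (y * τ) = a₂ * (Real.exp (y * (τ + σ)) * Real.exp (-(y * σ))) := by
            rw [e1]
        _ = a₂ * (b₁ / a₂) * Real.exp (-(y * σ)) := by rw [hexp]; ring
        _ = b₁ * Real.exp (-(y * σ)) := by field_simp
    have : a₂ * Real.exp (y * τ) - b₁ * Real.exp (-(y * σ)) = 0 := by rw [key]; ring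
    rw [this]
    exact le_of_lt (lt_min hx₁0 hx₂0)
  · -- second inequality
    set x : ℝ := min x₁ x₂ with hx
    have hxpos : 0 < x := lt_min hx₁0 hx₂0
    have hub : b₂ * Real.exp (x * σ) ≤ b₂ + ε / 2 := by
      have hxle : x * σ ≤ Real.log (1 + ε / (2 * b₂)) := by
        have : x ≤ x₁ := min_le_left _ _
        calc x * σ ≤ x₁ * σ := by nlinarith
          _ = Real.log (1 + ε / (2 * b₂)) := by
            rw [hx₁]; field_simp
      have := Real.exp_le_exp.2 hxle
      rw [Real.exp_log (by linarith)] at this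
      calc b₂ * Real.exp (x * σ) ≤ b₂ * (1 + ε / (2 * b₂)) := by nlinarith
        _ = b₂ + ε / 2 := by field_simp
    have hlb : a₁ - ε / 2 ≤ a₁ * Real.exp (-(x * τ)) := by
      have h1' : 1 - x * τ ≤ Real.exp (-(x * τ)) := by
        have := Real.add_one_le_exp (-(x * τ)); linarith
      have hxt : a₁ * (x * τ) ≤ ε / 2 := by
        have : x ≤ x₂ := min_le_right _ _
        have : x * (a₁ * τ) ≤ x₂ * (a₁ * τ) := mul_le_mul_of_nonneg_right this (by positivity)
        have hx₂e : x₂ * (a₁ * τ) = ε / 2 := by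
          rw [hx₂]; field_simp
        nlinarith
      nlinarith [Real.exp_pos (-(x * τ))]
    have : b₂ * Real.exp (x * σ) - a₁ * Real.exp (-(x * τ)) ≤ b₂ - a₁ + ε := by linarith
    linarith [hε.ge]
end

section
/- Let a, b, g, h: ℝ → ℝ be measurable with a(t) ≥ b(t) ≥ 0, g(t) ≤ t, h(t) ≥ t, and let t₁ be fixed. Suppose u₀: ℝ → ℝ is nonnegative, locally integrable, zero for t < t₁, and satisfies u₀(t) ≥ a(t)·exp(∫_{g(t)}^t u₀(s) ds) - b(t)·exp(-∫_t^{h(t)} u₀(s) ds) for t ≥ t₁. Define u_{n+1}(t) = a(t)·exp(∫_{g(t)}^t u_n(s) ds) - b(t)·exp(-∫_t^{h(t)} u_n(s) ds) for t ≥ t₁ (and u_{n+1}(t) = 0 for t < t₁). Then for every n and every t ≥ t₁: a(t) - b(t) ≤ u_{n+1}(t) ≤ u_n(t) ≤ u₀(t); in particular the sequence (u_n(t)) is nonincreasing in n and bounded below by 0, hence converges pointwise. -/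
open Real MeasureTheory Filter intervalIntegral

theorem stmt_10 (a b g h : ℝ → ℝ) (t₁ : ℝ)
    (ha : Measurable a) (hb : Measurable b) (hg : Measurable g) (hh : Measurable h)
    (hab : ∀ t, b t ≤ a t) (hb0 : ∀ t, 0 ≤ b t)
    (hgt : ∀ t, g t ≤ t) (hht : ∀ t, t ≤ h t)
    (u : ℕ → ℝ → ℝ)
    (hu0nonneg : ∀ t, 0 ≤ u 0 t)
    (hu0loc : LocallyIntegrable (u 0) volume)
    (hu0zero : ∀ t, t < t₁ → u 0 t = 0)
    (hu0ineq : ∀ t, t₁ ≤ t →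
      a t * Real.exp (∫ s in (g t)..t, u 0 s)
        - b t * Real.exp (-∫ s in t..(h t), u 0 s) ≤ u 0 t)
    (hrec : ∀ n t, t₁ ≤ t →
      u (n + 1) t = a t * Real.exp (∫ s in (g t)..t, u n s)
        - b t * Real.exp (-∫ s in t..(h t), u n s))
    (hreczero : ∀ n t, t < t₁ → u (n + 1) t = 0) :
    (∀ n t, t₁ ≤ t →
      a t - b t ≤ u (n + 1) t ∧ u (n + 1) t ≤ u n t ∧ u n t ≤ u 0 t) ∧
    (∀ t, t₁ ≤ t → ∃ L : ℝ, Tendsto (fun n => u n t) atTop (nhds L)) := by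
  have ha0 : ∀ t, 0 ≤ a t := fun t => le_trans (hb0 t) (hab t)
  -- key pointwise lower bound: if u n ≥ 0 then u (n+1) t ≥ a t - b t for t ≥ t₁
  have lower : ∀ n, (∀ t, 0 ≤ u n t) → ∀ t, t₁ ≤ t → a t - b t ≤ u (n + 1) t := by
    intro n hnn t ht
    rw [hrec n t ht]
    have hI : (0:ℝ) ≤ ∫ s in (g t)..t, u n s :=
      intervalIntegral.integral_nonneg (hgt t) (fun s _ => hnn s)
    have hJ : (0:ℝ) ≤ ∫ s in t..(h t), u n s :=
      intervalIntegral.integral_nonneg (hht t) (fun s _ => hnn s)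
    have h1 : a t ≤ a t * Real.exp (∫ s in (g t)..t, u n s) := by
      nlinarith [Real.one_le_exp hI, ha0 t]
    have h2 : b t * Real.exp (-∫ s in t..(h t), u n s) ≤ b t := by
      have : Real.exp (-∫ s in t..(h t), u n s) ≤ 1 := by
        rw [Real.exp_le_one_iff]; linarith
      nlinarith [hb0 t]
    linarith
  -- main induction
  have key : ∀ n, (∀ t, 0 ≤ u n t) ∧ (∀ t, u (n + 1) t ≤ u n t) ∧
      LocallyIntegrable (u n) volume := by
    intro n
    induction n with
    | zero =>
      refine ⟨hu0nonneg, ?_, hu0loc⟩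
      intro t
      rcases lt_or_ge t t₁ with ht | ht
      · rw [hreczero 0 t ht, hu0zero t ht]
      · rw [hrec 0 t ht]; exact hu0ineq t ht
    | succ n ih =>
      obtain ⟨hnn, hmono, hloc⟩ := ih
      have hnn1 : ∀ t, 0 ≤ u (n + 1) t := by
        intro t
        rcases lt_or_ge t t₁ with ht | ht
        · rw [hreczero n t ht]
        · have := lower n hnn t ht
          have := hab t
          linarith
      have hii : ∀ c d : ℝ, IntervalIntegrable (u n) volume c d := fun c d =>
        (hloc.integrableOn_isCompact isCompact_uIcc).intervalIntegrable
      -- measurability of u (n+1)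
      have hΦ : Continuous (fun x => ∫ s in t₁..x, u n s) :=
        intervalIntegral.continuous_primitive hii t₁
      have heq : u (n + 1) = fun t => if t₁ ≤ t then
          a t * Real.exp ((∫ s in t₁..t, u n s) - ∫ s in t₁..(g t), u n s)
            - b t * Real.exp (-((∫ s in t₁..(h t), u n s) - ∫ s in t₁..t, u n s)) else 0 := by
        funext t
        rcases lt_or_ge t t₁ with ht | ht
        · rw [hreczero n t ht, if_neg (not_le.mpr ht)]
        · rw [if_pos ht, hrec n t ht,
            intervalIntegral.integral_interval_sub_left (hii t₁ t) (hii t₁ (g t)),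
            intervalIntegral.integral_interval_sub_left (hii t₁ (h t)) (hii t₁ t)]
      have hmeas1 : Measurable (u (n + 1)) := by
        rw [heq]
        refine Measurable.ite measurableSet_Ici ?_ measurable_const
        exact (ha.mul ((Real.measurable_exp).comp
            ((hΦ.measurable).sub ((hΦ.measurable).comp hg)))).sub
          (hb.mul ((Real.measurable_exp).comp
            (((hΦ.measurable).comp hh).sub (hΦ.measurable)).neg))
      have hloc1 : LocallyIntegrable (u (n + 1)) volume := by
        refine hloc.mono hmeas1.aestronglyMeasurable (ae_of_all _ fun t => ?_)
        rw [Real.norm_eq_abs, Real.norm_eq_abs, abs_of_nonneg (hnn1 t),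
          abs_of_nonneg (hnn t)]
        exact hmono t
      have hii1 : ∀ c d : ℝ, IntervalIntegrable (u (n + 1)) volume c d := fun c d =>
        (hloc1.integrableOn_isCompact isCompact_uIcc).intervalIntegrable
      refine ⟨hnn1, ?_, hloc1⟩
      intro t
      rcases lt_or_ge t t₁ with ht | ht
      · rw [hreczero (n + 1) t ht, hreczero n t ht]
      · rw [hrec (n + 1) t ht, hrec n t ht]
        have I1 : (∫ s in (g t)..t, u (n + 1) s) ≤ ∫ s in (g t)..t, u n s :=
          intervalIntegral.integral_mono_on (hgt t) (hii1 _ _) (hii _ _)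
            (fun s _ => hmono s)
        have I2 : (∫ s in t..(h t), u (n + 1) s) ≤ ∫ s in t..(h t), u n s :=
          intervalIntegral.integral_mono_on (hht t) (hii1 _ _) (hii _ _)
            (fun s _ => hmono s)
        have h1 : a t * Real.exp (∫ s in (g t)..t, u (n + 1) s)
            ≤ a t * Real.exp (∫ s in (g t)..t, u n s) :=
          mul_le_mul_of_nonneg_left (Real.exp_le_exp.mpr I1) (ha0 t)
        have h2 : b t * Real.exp (-∫ s in t..(h t), u n s)
            ≤ b t * Real.exp (-∫ s in t..(h t), u (n + 1) s) :=
          mul_le_mul_of_nonneg_left (Real.exp_le_exp.mpr (neg_le_neg I2)) (hb0 t)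
        linarith
  have chain : ∀ n t, u n t ≤ u 0 t := by
    intro n
    induction n with
    | zero => exact fun t => le_rfl
    | succ n ih => exact fun t => le_trans ((key n).2.1 t) (ih t)
  constructor
  · intro n t ht
    exact ⟨lower n (key n).1 t ht, (key n).2.1 t, chain n t⟩
  · intro t ht
    have hanti : Antitone (fun n => u n t) :=
      antitone_nat_of_succ_le (fun n => (key n).2.1 t)
    have hbdd : BddBelow (Set.range fun n => u n t) := by
      refine ⟨0, ?_⟩
      rintro x ⟨n, rfl⟩
      exact (key n).1 t
    exact ⟨_, tendsto_atTop_ciInf hanti hbdd⟩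
end

section
/- Let a, b, g, h be as in Theorem 1 with a(t) ≥ b(t) ≥ 0, g(t) ≤ t ≤ h(t). Suppose u: [t₁, ∞) → ℝ is nonnegative, locally integrable (extended by 0 for t < t₁) and satisfies the equation u(t) = a(t)·exp(∫_{g(t)}^t u(s) ds) - b(t)·exp(-∫_t^{h(t)} u(s) ds) for almost all t ≥ t₁. Then x(t) := x(t₁)·exp(-∫_{t₁}^t u(s) ds) with x(t₁) > 0 is a positive, nonincreasing solution of x'(t) + a(t)x(g(t)) - b(t)x(h(t)) = 0 for almost all t ≥ t₁. -/
open Real MeasureTheory Filter intervalIntegral Metric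

theorem ae_hasDerivAt_intervalIntegral (u : ℝ → ℝ) (huloc : LocallyIntegrable u volume)
    (t₁ : ℝ) :
    ∀ᵐ x ∂(volume : Measure ℝ), HasDerivAt (fun r => ∫ s in t₁..r, u s) (u x) x := by
  have hint : ∀ p q : ℝ, IntervalIntegrable u volume p q := fun p q =>
    (huloc.integrableOn_isCompact isCompact_uIcc).intervalIntegrable
  filter_upwards [IsUnifLocDoublingMeasure.ae_tendsto_average_norm_sub
    (μ := (volume : Measure ℝ)) huloc 1] with x hx
  rw [hasDerivAt_iff_tendsto]
  have hδ : Tendsto (fun y : ℝ => |y - x|) (nhdsWithin x {x}ᶜ) (nhdsWithin 0 (Set.Ioi 0)) := by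
    rw [tendsto_nhdsWithin_iff]
    constructor
    · have hc : Continuous fun y : ℝ => |y - x| := by continuity
      have := hc.tendsto x
      simp only [sub_self, abs_zero] at this
      exact this.mono_left nhdsWithin_le_nhds
    · filter_upwards [self_mem_nhdsWithin] with y hy
      simpa [sub_eq_zero, abs_pos] using hy
  have H := hx (fun _ : ℝ => x) (fun y => |y - x|) hδ
    (by filter_upwards with y; simp [Metric.mem_closedBall])
  -- H : Tendsto (fun y => ⨍ s in closedBall x |y - x|, ‖u s - u x‖) (𝓝[≠] x) (𝓝 0)
  have key : ∀ y : ℝ, y ≠ x →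
      ‖y - x‖⁻¹ * ‖(∫ s in t₁..y, u s) - (∫ s in t₁..x, u s) - (y - x) • u x‖
        ≤ 2 * ⨍ s in closedBall x |y - x|, ‖u s - u x‖ := by
    intro y hy
    have hFy : (∫ s in t₁..y, u s) - (∫ s in t₁..x, u s) = ∫ s in x..y, u s := by
      rw [← intervalIntegral.integral_add_adjacent_intervals (hint t₁ x) (hint x y)]
      ring
    have hconst : (y - x) • u x = ∫ s in x..y, u x := by
      simp [smul_eq_mul, mul_comm]
    rw [hFy, hconst, ← intervalIntegral.integral_sub (hint x y) intervalIntegrable_const]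
    have hsub : Set.uIoc x y ⊆ closedBall x |y - x| := by
      intro s hs
      rcases Set.mem_uIoc.mp hs with h | h
      · rw [mem_closedBall, Real.dist_eq]
        rcases h with ⟨h1, h2⟩
        rw [abs_of_pos (by linarith), abs_of_nonneg (by linarith)]; linarith
      · rw [mem_closedBall, Real.dist_eq]
        rcases h with ⟨h1, h2⟩
        rw [abs_of_nonpos (by linarith), abs_of_nonpos (by linarith)]; linarith
    have hintOn : IntegrableOn (fun s => ‖u s - u x‖) (closedBall x |y - x|) volume :=
      (((huloc.integrableOn_isCompact (isCompact_closedBall _ _)).sub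
        (integrableOn_const measure_closedBall_lt_top.ne)).norm)
    have h1 : ‖∫ s in x..y, (u s - u x)‖ ≤ ∫ s in closedBall x |y - x|, ‖u s - u x‖ := by
      refine (intervalIntegral.norm_integral_le_integral_norm_uIoc).trans ?_
      exact setIntegral_mono_set hintOn (Eventually.of_forall fun s => norm_nonneg _)
        (Eventually.of_forall hsub)
    have hmeas : (volume (closedBall x |y - x|)).toReal = 2 * |y - x| := by
      rw [Real.volume_closedBall, ENNReal.toReal_ofReal (by positivity)]
    have h2 : ∫ s in closedBall x |y - x|, ‖u s - u x‖
        = 2 * |y - x| * ⨍ s in closedBall x |y - x|, ‖u s - u x‖ := by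
      rw [setAverage_eq, smul_eq_mul, measureReal_def, ← hmeas, ← mul_assoc, mul_inv_cancel₀, one_mul]
      rw [hmeas]
      have : 0 < |y - x| := abs_pos.2 (sub_ne_zero.2 hy)
      positivity
    have hxy : ‖y - x‖ = |y - x| := rfl
    have hpos : (0:ℝ) < |y - x| := abs_pos.2 (sub_ne_zero.2 hy)
    calc ‖y - x‖⁻¹ * ‖∫ s in x..y, (u s - u x)‖
        ≤ ‖y - x‖⁻¹ * (2 * |y - x| * ⨍ s in closedBall x |y - x|, ‖u s - u x‖) := by
          rw [h2] at h1
          exact mul_le_mul_of_nonneg_left h1 (by positivity)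
      _ = 2 * ⨍ s in closedBall x |y - x|, ‖u s - u x‖ := by
          rw [hxy]; field_simp
  have hne : Tendsto (fun y : ℝ => ‖y - x‖⁻¹ *
      ‖(∫ s in t₁..y, u s) - (∫ s in t₁..x, u s) - (y - x) • u x‖)
      (nhdsWithin x {x}ᶜ) (nhds 0) := by
    apply squeeze_zero' (Eventually.of_forall fun y => by positivity)
      (by filter_upwards [self_mem_nhdsWithin] with y hy; exact key y hy)
    have := H.const_mul (2:ℝ)
    simpa using this
  have hpure : Tendsto (fun y : ℝ => ‖y - x‖⁻¹ *
      ‖(∫ s in t₁..y, u s) - (∫ s in t₁..x, u s) - (y - x) • u x‖)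
      (pure x) (nhds 0) := by
    have : ‖(x:ℝ) - x‖⁻¹ * ‖(∫ s in t₁..x, u s) - (∫ s in t₁..x, u s) - ((x:ℝ) - x) • u x‖ = 0 := by
      simp
    rw [tendsto_pure_left]
    intro s hs
    simpa [this] using mem_of_mem_nhds hs
  have : nhdsWithin x {x}ᶜ ⊔ pure x = nhds x := nhdsNE_sup_pure x
  rw [← this, tendsto_sup]
  exact ⟨hne, hpure⟩

theorem stmt_11 (a b g h u : ℝ → ℝ) (t₁ x₁ : ℝ) (hx₁ : 0 < x₁)
    (hab : ∀ t, b t ≤ a t) (hb0 : ∀ t, 0 ≤ b t)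
    (hgt : ∀ t, g t ≤ t) (hht : ∀ t, t ≤ h t)
    (hunonneg : ∀ t, 0 ≤ u t)
    (huloc : LocallyIntegrable u volume)
    (huzero : ∀ t, t < t₁ → u t = 0)
    (hueq : ∀ᵐ t ∂volume, t₁ ≤ t →
      u t = a t * Real.exp (∫ s in (g t)..t, u s)
        - b t * Real.exp (-∫ s in t..(h t), u s)) :
    (∀ t, t₁ ≤ t → 0 < x₁ * Real.exp (-∫ s in t₁..t, u s)) ∧
    AntitoneOn (fun t => x₁ * Real.exp (-∫ s in t₁..t, u s)) (Set.Ici t₁) ∧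
    (∀ᵐ t ∂volume, t₁ ≤ t →
      deriv (fun r => x₁ * Real.exp (-∫ s in t₁..r, u s)) t
        + a t * (x₁ * Real.exp (-∫ s in t₁..(g t), u s))
        - b t * (x₁ * Real.exp (-∫ s in t₁..(h t), u s)) = 0) := by
  have hint : ∀ p q : ℝ, IntervalIntegrable u volume p q := fun p q =>
    (huloc.integrableOn_isCompact isCompact_uIcc).intervalIntegrable
  refine ⟨fun t _ => by positivity, ?_, ?_⟩
  · intro s _ t _ hst
    have hF : (∫ x in t₁..s, u x) ≤ ∫ x in t₁..t, u x := by
      rw [← intervalIntegral.integral_add_adjacent_intervals (hint t₁ s) (hint s t)]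
      have : 0 ≤ ∫ x in s..t, u x :=
        intervalIntegral.integral_nonneg hst fun x _ => hunonneg x
      linarith
    exact mul_le_mul_of_nonneg_left (Real.exp_le_exp.2 (by linarith)) hx₁.le
  · filter_upwards [hueq, ae_hasDerivAt_intervalIntegral u huloc t₁] with t heq hF ht
    have hu := heq ht
    have hd : HasDerivAt (fun r => x₁ * Real.exp (-∫ s in t₁..r, u s))
        (x₁ * (Real.exp (-∫ s in t₁..t, u s) * -(u t))) t :=
      ((hF.neg).exp).const_mul x₁
    rw [hd.deriv]
    have eq1 : (∫ s in t₁..g t, u s) = (∫ s in t₁..t, u s) - ∫ s in (g t)..t, u s := by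
      rw [← intervalIntegral.integral_add_adjacent_intervals (hint t₁ (g t)) (hint (g t) t)]
      ring
    have eq2 : (∫ s in t₁..h t, u s) = (∫ s in t₁..t, u s) + ∫ s in t..(h t), u s := by
      rw [← intervalIntegral.integral_add_adjacent_intervals (hint t₁ t) (hint t (h t))]
    rw [eq1, eq2, hu]
    simp only [neg_sub, neg_add_rev, sub_eq_neg_add, Real.exp_add]
    ring
end

section
/- Let u: ℝ → ℝ be nonnegative and locally integrable with u(t) = 0 for t < t₁, and suppose u(t) ≥ a(t)·exp(∫_{g(t)}^t u(s) ds) - b(t)·exp(-∫_t^{h(t)} u(s) ds) for t ≥ t₁, where a(t) ≥ b(t) ≥ 0, g(t) ≤ t ≤ h(t). If moreover ∫_0^∞ [a(s) - b(s)] ds = ∞, then the function x(t) = x(t₁)·exp(-∫_{t₁}^t u(s) ds) (x(t₁) > 0) satisfies 0 < x(t) ≤ x(t₁)·exp(-∫_{t₁}^t [a(s) - b(s)] ds) for t ≥ t₁ and x(t) → 0 as t → ∞. -/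
open Real MeasureTheory Filter intervalIntegral

theorem stmt_14 (a b g h u : ℝ → ℝ) (t₁ x₁ : ℝ) (hx₁ : 0 < x₁)
    (hab : ∀ t, b t ≤ a t) (hb0 : ∀ t, 0 ≤ b t)
    (hgt : ∀ t, g t ≤ t) (hht : ∀ t, t ≤ h t)
    (hunonneg : ∀ t, 0 ≤ u t)
    (huloc : LocallyIntegrable u volume)
    (huzero : ∀ t, t < t₁ → u t = 0)
    (huineq : ∀ t, t₁ ≤ t →
      a t * Real.exp (∫ s in (g t)..t, u s)
        - b t * Real.exp (-∫ s in t..(h t), u s) ≤ u t)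
    (hdiv : Tendsto (fun T : ℝ => ∫ s in (0 : ℝ)..T, (a s - b s)) atTop atTop) :
    (∀ t, t₁ ≤ t →
      0 < x₁ * Real.exp (-∫ s in t₁..t, u s) ∧
      x₁ * Real.exp (-∫ s in t₁..t, u s)
        ≤ x₁ * Real.exp (-∫ s in t₁..t, (a s - b s))) ∧
    Tendsto (fun t : ℝ => x₁ * Real.exp (-∫ s in t₁..t, u s)) atTop (nhds 0) := by
  have huint : ∀ s t : ℝ, IntervalIntegrable u volume s t := fun s t =>
    (huloc.integrableOn_isCompact isCompact_uIcc).intervalIntegrable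
  -- pointwise inequality a - b ≤ u for t ≥ t₁
  have hpoint : ∀ t, t₁ ≤ t → a t - b t ≤ u t := by
    intro t ht
    have h1 : (0:ℝ) ≤ ∫ s in (g t)..t, u s :=
      intervalIntegral.integral_nonneg (hgt t) (fun s _ => hunonneg s)
    have h2 : (0:ℝ) ≤ ∫ s in t..(h t), u s :=
      intervalIntegral.integral_nonneg (hht t) (fun s _ => hunonneg s)
    have ha0 : 0 ≤ a t := le_trans (hb0 t) (hab t)
    have e1 : a t ≤ a t * Real.exp (∫ s in (g t)..t, u s) := by
      nlinarith [Real.one_le_exp h1]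
    have e2 : b t * Real.exp (-∫ s in t..(h t), u s) ≤ b t := by
      nlinarith [Real.exp_le_one_iff.mpr (neg_nonpos.mpr h2), hb0 t,
        Real.exp_pos (-∫ s in t..(h t), u s)]
    have := huineq t ht
    linarith
  -- integrability of a - b on [0, t] for t ≥ 0
  have habint : ∀ t : ℝ, 0 ≤ t → IntervalIntegrable (fun s => a s - b s) volume 0 t := by
    intro t ht
    obtain ⟨T, hT⟩ := (hdiv.eventually_ge_atTop 1).exists_forall_of_atTop
    set T' := max T t with hT'
    have h1 : (1:ℝ) ≤ ∫ s in (0:ℝ)..T', (a s - b s) := hT T' (le_max_left _ _)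
    have hTi : IntervalIntegrable (fun s => a s - b s) volume 0 T' := by
      by_contra hc
      rw [intervalIntegral.integral_undef hc] at h1
      linarith
    exact hTi.mono_set (Set.uIcc_subset_uIcc_left
      (Set.mem_uIcc.mpr (Or.inl ⟨ht, le_max_right _ _⟩)))
  constructor
  · intro t ht
    refine ⟨by positivity, ?_⟩
    have hmono : (∫ s in t₁..t, (a s - b s)) ≤ ∫ s in t₁..t, u s := by
      by_cases hi : IntervalIntegrable (fun s => a s - b s) volume t₁ t
      · exact intervalIntegral.integral_mono_on ht hi (huint t₁ t)
          (fun s hs => hpoint s hs.1)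
      · rw [intervalIntegral.integral_undef hi]
        exact intervalIntegral.integral_nonneg ht (fun s _ => hunonneg s)
    exact mul_le_mul_of_nonneg_left (Real.exp_le_exp.mpr (neg_le_neg hmono)) hx₁.le
  · -- tendsto
    set T₀ := max t₁ 0 with hT₀
    have key : Tendsto (fun t => ∫ s in t₁..t, u s) atTop atTop := by
      have hC : Tendsto (fun t : ℝ => (∫ s in (0:ℝ)..t, (a s - b s))
          - (∫ s in (0:ℝ)..T₀, (a s - b s))) atTop atTop :=
        hdiv.atTop_add tendsto_const_nhds
      refine tendsto_atTop_mono' _ ?_ hC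
      filter_upwards [eventually_ge_atTop T₀] with t ht
      have hT₀0 : (0:ℝ) ≤ T₀ := le_max_right _ _
      have ht0 : (0:ℝ) ≤ t := le_trans hT₀0 ht
      have hi1 : IntervalIntegrable (fun s => a s - b s) volume 0 T₀ := habint T₀ hT₀0
      have hi2 : IntervalIntegrable (fun s => a s - b s) volume T₀ t :=
        (habint t ht0).mono_set (by
          rw [Set.uIcc_of_le ht, Set.uIcc_of_le ht0]
          exact Set.Icc_subset_Icc hT₀0 le_rfl)
      have hsplit : (∫ s in (0:ℝ)..T₀, (a s - b s)) + (∫ s in T₀..t, (a s - b s))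
          = ∫ s in (0:ℝ)..t, (a s - b s) :=
        intervalIntegral.integral_add_adjacent_intervals hi1 hi2
      have h1 : (∫ s in T₀..t, (a s - b s)) ≤ ∫ s in T₀..t, u s :=
        intervalIntegral.integral_mono_on ht hi2 (huint T₀ t)
          (fun s hs => hpoint s (le_trans (le_max_left _ _) hs.1))
      have h2 : (0:ℝ) ≤ ∫ s in t₁..T₀, u s :=
        intervalIntegral.integral_nonneg (le_max_left _ _) (fun s _ => hunonneg s)
      have hsplit2 : (∫ s in t₁..T₀, u s) + (∫ s in T₀..t, u s)
          = ∫ s in t₁..t, u s :=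
        intervalIntegral.integral_add_adjacent_intervals (huint _ _) (huint _ _)
      linarith
    have : Tendsto (fun t => Real.exp (-∫ s in t₁..t, u s)) atTop (nhds 0) :=
      Real.tendsto_exp_atBot.comp (tendsto_neg_atBot_iff.mpr key)
    simpa using this.const_mul x₁
end

section
/- Let a₁, a₂, b₁, b₂, τ, σ > 0 and suppose (d₁, d₂) with d₁ > 0, d₂ > 0 satisfies a₂·e^(d₂τ) - b₁·e^(-d₂σ) ≤ d₁ and b₂·e^(d₁σ) - a₁·e^(-d₁τ) ≤ d₂. Let a, b, g, h satisfy a₁ ≤ a(t) ≤ a₂, b₁ ≤ b(t) ≤ b₂, t - τ ≤ g(t) ≤ t, t ≤ h(t) ≤ t + σ. Then for any measurable u with -d₂ ≤ u(t) ≤ d₁ for all t, the function (Au)(t) = a(t)·exp(-∫_{g(t)}^t u(s) ds) - b(t)·exp(∫_t^{h(t)} u(s) ds) also satisfies -d₂ ≤ (Au)(t) ≤ d₁ for all t. -/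
open Real MeasureTheory intervalIntegral

lemma aux_int_bound (u : ℝ → ℝ) (hu : Measurable u) (c d : ℝ)
    (hbd : ∀ t, -c ≤ u t ∧ u t ≤ d) (x y : ℝ) (hxy : x ≤ y) :
    -c * (y - x) ≤ (∫ s in x..y, u s) ∧ (∫ s in x..y, u s) ≤ d * (y - x) := by
  have hint : IntervalIntegrable u volume x y := by
    apply IntervalIntegrable.mono_fun (intervalIntegrable_const (c := max c d))
      hu.aestronglyMeasurable
    filter_upwards with s
    rw [Real.norm_eq_abs, Real.norm_eq_abs, abs_le]
    have h1 := (hbd s).1; have h2 := (hbd s).2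
    constructor
    · calc -|max c d| ≤ -(max c d) := neg_le_neg (le_abs_self _)
        _ ≤ -c := by simp [le_max_left]
        _ ≤ u s := h1
    · exact h2.trans ((le_max_right c d).trans (le_abs_self _))
  constructor
  · have := intervalIntegral.integral_mono_on hxy intervalIntegrable_const hint
      (fun s _ => (hbd s).1)
    simpa [mul_comm] using this
  · have := intervalIntegral.integral_mono_on hxy hint intervalIntegrable_const
      (fun s _ => (hbd s).2)
    simpa [mul_comm] using this

theorem stmt_16 (a₁ a₂ b₁ b₂ τ σ d₁ d₂ : ℝ)
    (ha₁ : 0 < a₁) (ha₂ : 0 < a₂) (hb₁ : 0 < b₁) (hb₂ : 0 < b₂)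
    (hτ : 0 < τ) (hσ : 0 < σ) (hd₁ : 0 < d₁) (hd₂ : 0 < d₂)
    (hsys1 : a₂ * Real.exp (d₂ * τ) - b₁ * Real.exp (-(d₂ * σ)) ≤ d₁)
    (hsys2 : b₂ * Real.exp (d₁ * σ) - a₁ * Real.exp (-(d₁ * τ)) ≤ d₂)
    (a b g h : ℝ → ℝ)
    (hab : ∀ t, a₁ ≤ a t ∧ a t ≤ a₂) (hbb : ∀ t, b₁ ≤ b t ∧ b t ≤ b₂)
    (hg : ∀ t, t - τ ≤ g t ∧ g t ≤ t) (hh : ∀ t, t ≤ h t ∧ h t ≤ t + σ)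
    (u : ℝ → ℝ) (hu : Measurable u)
    (hubd : ∀ t, -d₂ ≤ u t ∧ u t ≤ d₁) :
    ∀ t, -d₂ ≤ a t * Real.exp (-∫ s in (g t)..t, u s)
            - b t * Real.exp (∫ s in t..(h t), u s) ∧
         a t * Real.exp (-∫ s in (g t)..t, u s)
            - b t * Real.exp (∫ s in t..(h t), u s) ≤ d₁ := by
  intro t
  obtain ⟨hg1, hg2⟩ := hg t
  obtain ⟨hh1, hh2⟩ := hh t
  obtain ⟨hI1l, hI1u⟩ := aux_int_bound u hu d₂ d₁ hubd (g t) t hg2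
  obtain ⟨hI2l, hI2u⟩ := aux_int_bound u hu d₂ d₁ hubd t (h t) hh1
  set I1 := ∫ s in (g t)..t, u s
  set I2 := ∫ s in t..(h t), u s
  have hlen1 : t - g t ≤ τ := by linarith
  have hlen2 : h t - t ≤ σ := by linarith
  -- bounds on I1, I2
  have hI1a : -I1 ≤ d₂ * τ := by nlinarith
  have hI1b : -(d₁ * τ) ≤ -I1 := by nlinarith
  have hI2a : I2 ≤ d₁ * σ := by nlinarith
  have hI2b : -(d₂ * σ) ≤ I2 := by nlinarith
  have e1u : Real.exp (-I1) ≤ Real.exp (d₂ * τ) := Real.exp_le_exp.2 hI1a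
  have e1l : Real.exp (-(d₁ * τ)) ≤ Real.exp (-I1) := Real.exp_le_exp.2 hI1b
  have e2u : Real.exp I2 ≤ Real.exp (d₁ * σ) := Real.exp_le_exp.2 hI2a
  have e2l : Real.exp (-(d₂ * σ)) ≤ Real.exp I2 := Real.exp_le_exp.2 hI2b
  obtain ⟨hal, hau⟩ := hab t
  obtain ⟨hbl, hbu⟩ := hbb t
  have epos1 : (0:ℝ) < Real.exp (-I1) := Real.exp_pos _
  have epos2 : (0:ℝ) < Real.exp I2 := Real.exp_pos _
  have hA : a t * Real.exp (-I1) ≤ a₂ * Real.exp (d₂ * τ) :=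
    mul_le_mul hau e1u epos1.le ha₂.le
  have hA' : a₁ * Real.exp (-(d₁ * τ)) ≤ a t * Real.exp (-I1) :=
    mul_le_mul hal e1l (Real.exp_pos _).le (ha₁.trans_le hal).le
  have hB : b t * Real.exp I2 ≤ b₂ * Real.exp (d₁ * σ) :=
    mul_le_mul hbu e2u epos2.le hb₂.le
  have hB' : b₁ * Real.exp (-(d₂ * σ)) ≤ b t * Real.exp I2 :=
    mul_le_mul hbl e2l (Real.exp_pos _).le (hb₁.trans_le hbl).le
  constructor <;> linarith
end

section
/- Let a₁, a₂, b₁, b₂, τ, σ > 0 with b₂ < a₁ and 0 < a₂ - b₁ < (1/(τ+σ))·ln(a₁/b₂). Define f(x) = b₂·e^(xσ) - a₁·e^(-xτ) and g(y) = a₂·e^(yτ) - b₁·e^(-yσ). Then: (i) g is strictly increasing and hence invertible on ℝ; (ii) f(x₁) = 0 where x₁ = (1/(τ+σ))·ln(a₁/b₂) > 0; (iii) setting h(x) = g⁻¹(x) - f(x) one has h(a₂ - b₁) > 0 and h(x) → -∞ as x → ∞; (iv) hence there exists x₀ > a₂ - b₁ > 0 with g⁻¹(x₀) = f(x₀) >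 0, giving a positive solution (x₀, f(x₀)) of the system g(y) ≤ x, f(x) ≤ y. -/
open Real Filter

set_option maxHeartbeats 1600000 in
theorem stmt_18 (a₁ a₂ b₁ b₂ τ σ : ℝ)
    (ha₁ : 0 < a₁) (ha₂ : 0 < a₂) (hb₁ : 0 < b₁) (hb₂ : 0 < b₂)
    (hτ : 0 < τ) (hσ : 0 < σ)
    (h1 : b₂ < a₁) (h2 : 0 < a₂ - b₁)
    (h3 : a₂ - b₁ < (1 / (τ + σ)) * Real.log (a₁ / b₂)) :
    StrictMono (fun y : ℝ => a₂ * Real.exp (y * τ) - b₁ * Real.exp (-(y * σ))) ∧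
    (b₂ * Real.exp (((1 / (τ + σ)) * Real.log (a₁ / b₂)) * σ)
      - a₁ * Real.exp (-((1 / (τ + σ)) * Real.log (a₁ / b₂)) * τ) = 0) ∧
    (0 < (1 / (τ + σ)) * Real.log (a₁ / b₂)) ∧
    (0 < Function.invFun (fun y : ℝ => a₂ * Real.exp (y * τ) - b₁ * Real.exp (-(y * σ))) (a₂ - b₁)
        - (b₂ * Real.exp ((a₂ - b₁) * σ) - a₁ * Real.exp (-((a₂ - b₁) * τ)))) ∧
    Tendsto (fun x : ℝ =>
      Function.invFun (fun y : ℝ => a₂ * Real.exp (y * τ) - b₁ * Real.exp (-(y * σ))) x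
        - (b₂ * Real.exp (x * σ) - a₁ * Real.exp (-(x * τ)))) atTop atBot ∧
    ∃ x₀ : ℝ, a₂ - b₁ < x₀ ∧
      Function.invFun (fun y : ℝ => a₂ * Real.exp (y * τ) - b₁ * Real.exp (-(y * σ))) x₀
        = b₂ * Real.exp (x₀ * σ) - a₁ * Real.exp (-(x₀ * τ)) ∧
      0 < b₂ * Real.exp (x₀ * σ) - a₁ * Real.exp (-(x₀ * τ)) ∧
      a₂ * Real.exp ((b₂ * Real.exp (x₀ * σ) - a₁ * Real.exp (-(x₀ * τ))) * τ)
        - b₁ * Real.exp (-((b₂ * Real.exp (x₀ * σ) - a₁ * Real.exp (-(x₀ * τ))) * σ)) ≤ x₀ := by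
  have hτσ : 0 < τ + σ := by linarith
  set x₁ : ℝ := (1 / (τ + σ)) * Real.log (a₁ / b₂) with hx₁def
  set g : ℝ → ℝ := fun y => a₂ * Real.exp (y * τ) - b₁ * Real.exp (-(y * σ)) with hgdef
  set f : ℝ → ℝ := fun x => b₂ * Real.exp (x * σ) - a₁ * Real.exp (-(x * τ)) with hfdef
  -- strict monotonicity
  have hgmono : StrictMono g := by
    intro u v huv
    simp only [hgdef]
    have e1 : Real.exp (u * τ) < Real.exp (v * τ) := by
      apply Real.exp_lt_exp.2; nlinarith
    have e2 : Real.exp (-(v * σ)) < Real.exp (-(u * σ)) := by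
      apply Real.exp_lt_exp.2; nlinarith
    nlinarith
  have hfmono : StrictMono f := by
    intro u v huv
    simp only [hfdef]
    have e1 : Real.exp (u * σ) < Real.exp (v * σ) := by
      apply Real.exp_lt_exp.2; nlinarith
    have e2 : Real.exp (-(v * τ)) < Real.exp (-(u * τ)) := by
      apply Real.exp_lt_exp.2; nlinarith
    nlinarith
  -- x₁ > 0
  have hx₁pos : 0 < x₁ :=
    mul_pos (by positivity) (Real.log_pos ((one_lt_div hb₂).2 h1))
  -- f x₁ = 0
  have hfx₁ : f x₁ = 0 := by
    have key : Real.exp (x₁ * σ) * Real.exp (x₁ * τ) = a₁ / b₂ := by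
      rw [← Real.exp_add, show x₁ * σ + x₁ * τ = Real.log (a₁ / b₂) by
        rw [hx₁def]; field_simp; ring]
      exact Real.exp_log (by positivity)
    have key2 : b₂ * (Real.exp (x₁ * σ) * Real.exp (x₁ * τ)) = a₁ := by
      rw [key]; field_simp
    have hpos := (Real.exp_pos (x₁ * τ)).ne'
    simp only [hfdef]
    rw [Real.exp_neg]
    field_simp
    linear_combination key2
  -- continuity
  have hgcont : Continuous g := by
    simp only [hgdef]; fun_prop
  have hfcont : Continuous f := by
    simp only [hfdef]; fun_prop
  -- surjectivity of g
  have hgtop : Tendsto g atTop atTop := by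
    have hA : Tendsto (fun y : ℝ => a₂ * Real.exp (y * τ)) atTop atTop :=
      (Real.tendsto_exp_atTop.comp (tendsto_id.atTop_mul_const hτ)).const_mul_atTop ha₂
    have hB : Tendsto (fun y : ℝ => -(b₁ * Real.exp (-(y * σ)))) atTop (nhds (-(b₁ * 0))) := by
      exact (((Real.tendsto_exp_atBot.comp
        (tendsto_neg_atTop_atBot.comp (tendsto_id.atTop_mul_const hσ))).const_mul b₁)).neg
    have := hA.atTop_add hB
    simpa [hgdef, sub_eq_add_neg] using this
  have hgbot : Tendsto g atBot atBot := by
    have hA : Tendsto (fun y : ℝ => a₂ * Real.exp (y * τ)) atBot (nhds (a₂ * 0)) :=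
      (Real.tendsto_exp_atBot.comp (tendsto_id.atBot_mul_const hτ)).const_mul a₂
    have hB : Tendsto (fun y : ℝ => -(b₁ * Real.exp (-(y * σ)))) atBot atBot := by
      apply tendsto_neg_atTop_atBot.comp
      exact (Real.tendsto_exp_atTop.comp
        (tendsto_neg_atBot_atTop.comp (tendsto_id.atBot_mul_const hσ))).const_mul_atTop hb₁
    have := hA.add_atBot hB
    simpa [hgdef, sub_eq_add_neg] using this
  have hgsurj : Function.Surjective g := hgcont.surjective hgtop hgbot
  -- the order isomorphism
  obtain ⟨e, hge, hge'⟩ : ∃ e : ℝ ≃o ℝ, (∀ y, g (e.symm y) = y) ∧ (∀ y, e.symm (g y) = y) :=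
    ⟨StrictMono.orderIsoOfSurjective g hgmono hgsurj,
      fun y => StrictMono.orderIsoOfSurjective_self_symm_apply g hgmono hgsurj y,
      fun y => StrictMono.orderIsoOfSurjective_symm_apply_self g hgmono hgsurj y⟩
  have hinv : Function.invFun g = fun x => e.symm x := by
    funext x
    exact hgmono.injective (by rw [Function.invFun_eq (hgsurj x), hge])
  have hg0 : g 0 = a₂ - b₁ := by simp [hgdef]
  have hsymm0 : e.symm (a₂ - b₁) = 0 := by
    rw [← hg0]; exact hge' 0
  -- part 4 value
  have hfab : f (a₂ - b₁) < 0 := by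
    have := hfmono h3
    rwa [hfx₁] at this
  have hpart4 : 0 < Function.invFun g (a₂ - b₁) - f (a₂ - b₁) := by
    rw [hinv]; simp only [hsymm0]; linarith
  -- eventual upper bound for the difference
  have hbound : ∀ᶠ x in atTop,
      e.symm x - f x ≤ (x + b₁) / (τ * a₂) + a₁ - b₂ * Real.exp (x * σ) := by
    filter_upwards [eventually_ge_atTop (a₂ - b₁)] with x hx
    obtain ⟨y, hyeq⟩ : ∃ y, e.symm x = y := ⟨_, rfl⟩
    rw [hyeq]
    have hy0 : 0 ≤ y := by
      have := e.symm.monotone hx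
      rwa [hsymm0, hyeq] at this
    have hyg : g (e.symm x) = x := hge x
    rw [hyeq] at hyg
    have hgx : a₂ * Real.exp (y * τ) - b₁ * Real.exp (-(y * σ)) = x := hyg
    have hexp1 : Real.exp (-(y * σ)) ≤ 1 := Real.exp_le_one_iff.2 (by nlinarith)
    have hkey : a₂ * Real.exp (y * τ) ≤ x + b₁ := by nlinarith [Real.exp_pos (-(y * σ))]
    have hlog : y * τ ≤ Real.log ((x + b₁) / a₂) := by
      have h5 : Real.exp (y * τ) ≤ (x + b₁) / a₂ := by
        rw [le_div_iff₀ ha₂]; nlinarith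
      calc y * τ = Real.log (Real.exp (y * τ)) := (Real.log_exp _).symm
        _ ≤ Real.log ((x + b₁) / a₂) :=
          Real.log_le_log (Real.exp_pos _) h5
    have hlog2 : Real.log ((x + b₁) / a₂) ≤ (x + b₁) / a₂ := by
      have hxpos : 0 < (x + b₁) / a₂ := div_pos (by linarith) ha₂
      linarith [Real.log_le_sub_one_of_pos hxpos]
    have hyle : y ≤ (x + b₁) / (τ * a₂) := by
      rw [le_div_iff₀ (mul_pos hτ ha₂)]
      calc y * (τ * a₂) = (y * τ) * a₂ := by ring
        _ ≤ ((x + b₁) / a₂) * a₂ :=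
            mul_le_mul_of_nonneg_right (le_trans hlog hlog2) ha₂.le
        _ = x + b₁ := by field_simp
    have hfxge : b₂ * Real.exp (x * σ) - a₁ ≤ f x := by
      simp only [hfdef]
      have : Real.exp (-(x * τ)) ≤ 1 := Real.exp_le_one_iff.2 (by nlinarith)
      nlinarith
    calc y - f x ≤ (x + b₁) / (τ * a₂) - (b₂ * Real.exp (x * σ) - a₁) :=
          sub_le_sub hyle hfxge
      _ = (x + b₁) / (τ * a₂) + a₁ - b₂ * Real.exp (x * σ) := by ring
  -- the comparison function tends to -∞
  have hψ : Tendsto (fun x : ℝ => (x + b₁) / (τ * a₂) + a₁ - b₂ * Real.exp (x * σ))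
      atTop atBot := by
    have hexp : Tendsto (fun x : ℝ => b₂ * Real.exp (x * σ) / x) atTop atTop := by
      have h0 : Tendsto (fun x : ℝ => Real.exp x / x ^ 1) atTop atTop :=
        Real.tendsto_exp_div_pow_atTop 1
      have h1' : Tendsto (fun x : ℝ => Real.exp (x * σ) / (x * σ)) atTop atTop := by
        have := h0.comp (tendsto_id.atTop_mul_const hσ)
        simpa [Function.comp_def] using this
      have h2' := h1'.const_mul_atTop (mul_pos hb₂ hσ)
      apply h2'.congr'
      filter_upwards [eventually_gt_atTop 0] with x hx
      field_simp
    have h3' : Tendsto (fun x : ℝ => b₂ * Real.exp (x * σ) / x - 1 / (τ * a₂)) atTop atTop := by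
      simpa [sub_eq_add_neg] using tendsto_atTop_add_const_right atTop (-(1 / (τ * a₂))) hexp
    have h4' : Tendsto (fun x : ℝ => x * (b₂ * Real.exp (x * σ) / x - 1 / (τ * a₂)))
        atTop atTop := tendsto_id.atTop_mul_atTop₀ h3'
    have h5' : Tendsto (fun x : ℝ => b₂ * Real.exp (x * σ) - x / (τ * a₂)) atTop atTop := by
      apply h4'.congr'
      filter_upwards [eventually_gt_atTop 0] with x hx
      field_simp
    have h6' : Tendsto (fun x : ℝ => -(b₂ * Real.exp (x * σ) - x / (τ * a₂))
        + (b₁ / (τ * a₂) + a₁)) atTop atBot :=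
      tendsto_atBot_add_const_right atTop _ (tendsto_neg_atTop_atBot.comp h5')
    apply h6'.congr
    intro x
    field_simp
    ring
  have htend : Tendsto (fun x : ℝ => Function.invFun g x - f x) atTop atBot := by
    rw [hinv]
    exact tendsto_atBot_mono' atTop hbound hψ
  -- existence of x₀
  have hcont : Continuous (fun x : ℝ => e.symm x - f x) :=
    (OrderIso.continuous e.symm).sub hfcont
  have htend' : Tendsto (fun x : ℝ => e.symm x - f x) atTop atBot := by
    rw [hinv] at htend; exact htend
  obtain ⟨N, hN1, hN2⟩ :=
    ((htend'.eventually (eventually_le_atBot (-1))).and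
      (eventually_ge_atTop (a₂ - b₁))).exists
  have hivt := intermediate_value_Icc' hN2 hcont.continuousOn
  have h0mem : (0 : ℝ) ∈ Set.Icc (e.symm N - f N) (e.symm (a₂ - b₁) - f (a₂ - b₁)) := by
    constructor
    · linarith
    · rw [hsymm0]; linarith
  obtain ⟨x₀, hx₀mem, hx₀eq⟩ := hivt h0mem
  have hx₀eq' : e.symm x₀ - f x₀ = 0 := hx₀eq
  have hx₀gt : a₂ - b₁ < x₀ := by
    rcases lt_or_eq_of_le hx₀mem.1 with h | h
    · exact h
    · exfalso
      rw [← h, hsymm0] at hx₀eq'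
      linarith
  have hfeq : e.symm x₀ = f x₀ := by linarith [hx₀eq']
  have hfx₀pos : 0 < f x₀ := by
    rw [← hfeq, ← hsymm0]
    exact e.symm.strictMono hx₀gt
  refine ⟨hgmono, ?_, hx₁pos, hpart4, htend, x₀, hx₀gt, ?_, hfx₀pos, ?_⟩
  · rw [neg_mul]; exact hfx₁
  · rw [hinv]; exact hfeq
  · have : g (f x₀) = x₀ := by rw [← hfeq]; exact hge x₀
    exact le_of_eq this
end
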